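/- Let $a, b > 0$ with $0 < s a \le b \le a$ for a constant $s \le 1$ and $\alpha \in [0,1]$. Then $(1-\alpha)a + \alpha b \le M_\alpha(s) \, a^{1-\alpha} b^{\alpha}$, where $M_\alpha(s) = 1 + \frac{\alpha(1-\alpha)(s-1)^2}{2 s^{\alpha+1}}$. -/

import Mathlib

private lemma bern {y p : ℝ} (hy : 0 ≤ y) (hp1 : 0 ≤ p) (hp2 : p ≤ 1) :
    y ^ p ≤ 1 + p * (y - 1) := by
  have h := rpow_one_add_le_one_add_mul_self (s := y - 1) (by linarith) hp1 hp2
  simpa using h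

private lemma key_ineq {α s : ℝ} (hα0 : 0 ≤ α) (hα1 : α ≤ 1) (hs : 0 < s) (hs1 : s ≤ 1) :
    (1 - α) + α * s ≤ s ^ α + α * (1 - α) * (1 - s) ^ 2 / (2 * s) := by
  set c := α * (1 - α) / 2 with hc
  set G : ℝ → ℝ := fun x => x ^ α + c * (x⁻¹ - 2 + x) - (1 - α) - α * x with hGdef
  have hderiv : ∀ x : ℝ, 0 < x →
      HasDerivAt G (α * x ^ (α - 1) + c * (-(x ^ 2)⁻¹ + 1) - α) x := by
    intro x hx
    have h1 : HasDerivAt (fun x : ℝ => x ^ α) (α * x ^ (α - 1)) x :=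
      Real.hasDerivAt_rpow_const (Or.inl hx.ne')
    have h2 : HasDerivAt (fun x : ℝ => x⁻¹ - 2 + x) (-(x ^ 2)⁻¹ + 1) x :=
      ((hasDerivAt_inv hx.ne').sub_const 2).add (hasDerivAt_id x)
    have h3 := (h1.add (h2.const_mul c)).sub_const (1 - α)
    have h4 := h3.sub ((hasDerivAt_id x).const_mul α)
    exact h4.congr_deriv (by ring)
  have hG : AntitoneOn G (Set.Icc s 1) := by
    apply antitoneOn_of_deriv_nonpos (convex_Icc s 1)
    · intro x hx
      have hx0 : 0 < x := lt_of_lt_of_le hs hx.1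
      exact (hderiv x hx0).differentiableAt.continuousAt.continuousWithinAt
    · intro x hx
      rw [interior_Icc] at hx
      exact ((hderiv x (lt_trans hs hx.1)).differentiableAt).differentiableWithinAt
    · intro x hx
      rw [interior_Icc] at hx
      have hx0 : 0 < x := lt_trans hs hx.1
      rw [(hderiv x hx0).deriv]
      -- key: x ^ (α - 1) ≤ 1 + (1 - α) / 2 * ((x ^ 2)⁻¹ - 1)
      have hxp : x ^ (α - 1) ≤ 1 + (1 - α) / 2 * ((x ^ 2)⁻¹ - 1) := by
        have hy : ((x ^ 2)⁻¹ : ℝ) = x ^ (-2 : ℝ) := by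
          rw [← Real.rpow_natCast x 2, ← Real.rpow_neg hx0.le]
          norm_num
        have hb := bern (y := (x ^ 2)⁻¹) (by positivity) (p := (1 - α) / 2)
          (by linarith) (by linarith)
        have heq : ((x ^ 2)⁻¹ : ℝ) ^ ((1 - α) / 2) = x ^ (α - 1) := by
          rw [hy, ← Real.rpow_mul hx0.le]
          congr 1
          ring
        rwa [heq] at hb
      have h5 := mul_le_mul_of_nonneg_left hxp hα0
      have h6 : α * (1 + (1 - α) / 2 * ((x ^ 2)⁻¹ - 1)) + c * (-(x ^ 2)⁻¹ + 1) - α = 0 := by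
        rw [hc]; ring
      linarith
  have h01 : G 1 ≤ G s := hG ⟨le_refl s, hs1⟩ ⟨hs1, le_refl 1⟩ hs1
  have hG1 : G 1 = 0 := by
    simp only [hGdef, Real.one_rpow, inv_one]
    ring
  have hcs : c * (s⁻¹ - 2 + s) = α * (1 - α) * (1 - s) ^ 2 / (2 * s) := by
    have h : s⁻¹ * s = 1 := inv_mul_cancel₀ hs.ne'
    rw [hc, eq_div_iff (by positivity : (2:ℝ) * s ≠ 0)]
    linear_combination α * (1 - α) * h
  simp only [hGdef] at h01
  rw [Real.one_rpow] at h01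
  norm_num at h01
  linarith

theorem stmt_10 (a b s α : ℝ) (ha : 0 < a) (hs : 0 < s) (hs1 : s ≤ 1)
    (h1 : s * a ≤ b) (hb : 0 < b) (h2 : b ≤ a) (hα : α ∈ Set.Icc (0:ℝ) 1) :
    (1 - α) * a + α * b ≤
      (1 + α * (1 - α) * (s - 1)^2 / (2 * s ^ (α + 1))) * (a ^ (1 - α) * b ^ α) := by
  obtain ⟨hα0, hα1⟩ := hα
  set M : ℝ := 1 + α * (1 - α) * (s - 1) ^ 2 / (2 * s ^ (α + 1)) with hM
  set t : ℝ := b / a with htdef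
  have ht0 : 0 < t := div_pos hb ha
  have hts : s ≤ t := (le_div_iff₀ ha).2 h1
  have ht1 : t ≤ 1 := (div_le_one ha).2 h2
  -- step A : α * (t - s) ≤ t ^ α - s ^ α
  have hstepA : α * (t - s) ≤ t ^ α - s ^ α := by
    have hb1 := bern (y := s / t) (by positivity) hα0 hα1
    have hst : s ^ α = t ^ α * (s / t) ^ α := by
      rw [Real.div_rpow hs.le ht0.le]
      field_simp
    have htp : 0 < t ^ α := Real.rpow_pos_of_pos ht0 α
    have hta : t ≤ t ^ α := by
      nth_rewrite 1 [← Real.rpow_one t]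
      exact Real.rpow_le_rpow_of_exponent_ge ht0 ht1 hα1
    have h7 : s ^ α ≤ t ^ α + α * (s - t) * (t ^ α / t) := by
      rw [hst]
      calc t ^ α * (s / t) ^ α ≤ t ^ α * (1 + α * (s / t - 1)) :=
            mul_le_mul_of_nonneg_left hb1 htp.le
        _ = t ^ α + α * (s - t) * (t ^ α / t) := by field_simp
    have h8 : α * (s - t) * (t ^ α / t) ≤ α * (s - t) := by
      have h9 : (1 : ℝ) ≤ t ^ α / t := (one_le_div ht0).2 hta
      nlinarith [mul_nonneg hα0 (sub_nonneg.2 hts)]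
    linarith
  -- step B : key inequality at s, and M * s ^ α
  have hsa : 0 < s ^ α := Real.rpow_pos_of_pos hs α
  have hsa1 : 0 < s ^ (α + 1) := Real.rpow_pos_of_pos hs (α + 1)
  have hMs : M * s ^ α = s ^ α + α * (1 - α) * (1 - s) ^ 2 / (2 * s) := by
    rw [hM]
    have h10 : s ^ (α + 1) = s ^ α * s := by
      rw [Real.rpow_add hs, Real.rpow_one]
    rw [h10]
    field_simp
    ring
  have hkey := key_ineq hα0 hα1 hs hs1
  have hM1 : (1 : ℝ) ≤ M := by
    rw [hM]
    have : 0 ≤ α * (1 - α) * (s - 1) ^ 2 / (2 * s ^ (α + 1)) :=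
      div_nonneg (mul_nonneg (mul_nonneg hα0 (by linarith)) (sq_nonneg _)) (by positivity)
    linarith
  have hpow_le : s ^ α ≤ t ^ α := Real.rpow_le_rpow hs.le hts hα0
  have hchain : (1 - α) + α * t ≤ M * t ^ α := by
    have h11 : (1 - α) + α * t ≤ M * s ^ α + (t ^ α - s ^ α) := by
      rw [hMs]; linarith
    have h12 : t ^ α - s ^ α ≤ M * (t ^ α - s ^ α) :=
      le_mul_of_one_le_left (by linarith) hM1
    nlinarith
  -- finish
  have hab : a ^ (1 - α) * b ^ α = a * t ^ α := by
    have hbeq : b = a * t := by rw [htdef]; field_simp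
    rw [hbeq, Real.mul_rpow ha.le ht0.le, ← mul_assoc, ← Real.rpow_add ha]
    norm_num
  have hbeq : b = a * t := by rw [htdef]; field_simp
  have hm := mul_le_mul_of_nonneg_left hchain ha.le
  rw [hab, hbeq]
  calc (1 - α) * a + α * (a * t) = a * (1 - α + α * t) := by ring
    _ ≤ a * (M * t ^ α) := hm
    _ = M * (a * t ^ α) := by ring
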